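/- Let R = ℂ⟦X,Y⟧ be the formal power series ring in two variables over ℂ and let k ≥ 2 be an integer. If l, n ∈ R both have zero constant coefficient and l·n = Y·(X² − Y^{2k−2}), then the dimension of the quotient ℂ-vector space R / Ideal.span {l, n} equals 2 or equals k. -/

import Mathlib

open MvPowerSeries

noncomputable section Stmt8Aux
set_option maxHeartbeats 1000000
set_option synthInstance.maxHeartbeats 400000

open Finsupp Finset

local notation "R2" => MvPowerSeries (Fin 2) ℂ

instance : IsDomain (MvPowerSeries (Fin 2) ℂ) := NoZeroDivisors.to_isDomain _



lemma fin2_cases {i j : Fin 2} (hij : i ≠ j) (x : Fin 2) : x = i ∨ x = j := by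
  revert hij; revert i j x; decide

lemma finsupp_decomp {i j : Fin 2} (hij : i ≠ j) (d : Fin 2 →₀ ℕ) :
    d = Finsupp.single i (d i) + Finsupp.single j (d j) := by
  ext x
  rcases fin2_cases hij x with rfl | rfl
  · simp [Finsupp.single_apply, hij.symm]
  · simp [Finsupp.single_apply, hij]

lemma single_add_single_apply_left {i j : Fin 2} (hij : i ≠ j) (a b : ℕ) :
    (Finsupp.single i a + Finsupp.single j b) i = a := by
  simp [Finsupp.single_apply, hij.symm]

lemma single_add_single_apply_right {i j : Fin 2} (hij : i ≠ j) (a b : ℕ) :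
    (Finsupp.single i a + Finsupp.single j b) j = b := by
  simp [Finsupp.single_apply, hij]

section Param

variable (i j : Fin 2) (ε : ℂ) (m : ℕ)

/-- weight of a monomial -/
def wt (d : Fin 2 →₀ ℕ) : ℕ := (m - 1) * d i + d j

lemma wt_add (u v : Fin 2 →₀ ℕ) : wt i j m (u + v) = wt i j m u + wt i j m v := by
  simp [wt]; ring

lemma wt_single_single {i j : Fin 2} (hij : i ≠ j) (m a b : ℕ) :
    wt i j m (Finsupp.single i a + Finsupp.single j b) = (m-1) * a + b := by
  rw [wt, single_add_single_apply_left hij, single_add_single_apply_right hij]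

/-- fiber of the weight, as a finset -/
def Fib (n : ℕ) : Finset (Fin 2 →₀ ℕ) :=
  (Finset.Iic (Finsupp.single i n + Finsupp.single j n)).filter (fun d => wt i j m d = n)

lemma mem_Fib {i j : Fin 2} (hij : i ≠ j) {m : ℕ} (hm : 2 ≤ m) {n : ℕ} {d : Fin 2 →₀ ℕ} :
    d ∈ Fib i j m n ↔ wt i j m d = n := by
  unfold Fib
  rw [Finset.mem_filter, Finset.mem_Iic]
  constructor
  · exact fun h => h.2
  · intro h
    refine ⟨?_, h⟩
    have h1 : d i ≤ n := by
      have : (m-1) * d i + d j = n := h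
      nlinarith [Nat.one_le_iff_ne_zero.mpr (by omega : m - 1 ≠ 0)]
    have h2 : d j ≤ n := by have : (m-1) * d i + d j = n := h; omega
    intro x
    rcases fin2_cases hij x with rfl | rfl
    · simpa [single_add_single_apply_left hij] using h1
    · simpa [single_add_single_apply_right hij] using h2

/-- The substitution map `X i ↦ ε t^(m-1)`, `X j ↦ t`, as a raw function. -/
def phiFun (f : R2) : PowerSeries ℂ :=
  PowerSeries.mk fun n => ∑ d ∈ Fib i j m n, ε ^ (d i) * MvPowerSeries.coeff d f

lemma coeff_phiFun (f : R2) (n : ℕ) :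
    PowerSeries.coeff n (phiFun i j ε m f) = ∑ d ∈ Fib i j m n, ε ^ (d i) * MvPowerSeries.coeff d f :=
  PowerSeries.coeff_mk _ _





end Param

lemma phiFun_mul {i j : Fin 2} (hij : i ≠ j) (ε : ℂ) {m : ℕ} (hm : 2 ≤ m) (f g : R2) :
    phiFun i j ε m (f * g) = phiFun i j ε m f * phiFun i j ε m g := by
  classical
  ext n
  rw [PowerSeries.coeff_mul, coeff_phiFun]
  have hwadd : ∀ u v : Fin 2 →₀ ℕ, wt i j m (u + v) = wt i j m u + wt i j m v := by
    intro u v; simp only [wt, Finsupp.add_apply]; ring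
  have hdisj1 : Set.PairwiseDisjoint (↑(Fib i j m n)) (Finset.HasAntidiagonal.antidiagonal : (Fin 2 →₀ ℕ) → Finset _) := by
    intro d _ d' _ hdd'
    simp only [Finset.disjoint_left]
    intro p hp hp'
    rw [Finset.HasAntidiagonal.mem_antidiagonal] at hp hp'
    exact hdd' (hp ▸ hp')
  have hdisj2 : Set.PairwiseDisjoint (↑(Finset.HasAntidiagonal.antidiagonal n))
      (fun pq : ℕ × ℕ => Fib i j m pq.1 ×ˢ Fib i j m pq.2) := by
    intro pq _ pq' _ hne
    simp only [Finset.disjoint_left]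
    intro uv huv huv'
    rw [Finset.mem_product] at huv huv'
    refine hne ?_
    have e1 := (mem_Fib hij hm).mp huv.1
    have e2 := (mem_Fib hij hm).mp huv.2
    have e1' := (mem_Fib hij hm).mp huv'.1
    have e2' := (mem_Fib hij hm).mp huv'.2
    exact Prod.ext (e1 ▸ e1') (e2 ▸ e2')
  have hbu : (Fib i j m n).biUnion Finset.HasAntidiagonal.antidiagonal
      = (Finset.HasAntidiagonal.antidiagonal n).biUnion (fun pq => Fib i j m pq.1 ×ˢ Fib i j m pq.2) := by
    ext uv
    simp only [Finset.mem_biUnion, Finset.HasAntidiagonal.mem_antidiagonal, Finset.mem_product,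
      Finset.HasAntidiagonal.mem_antidiagonal, mem_Fib hij hm]
    constructor
    · rintro ⟨d, hd, hsum⟩
      exact ⟨(wt i j m uv.1, wt i j m uv.2), by rw [← hwadd, hsum, hd], rfl, rfl⟩
    · rintro ⟨pq, hpq, h1, h2⟩
      exact ⟨uv.1 + uv.2, by rw [hwadd, h1, h2, hpq], rfl⟩
  calc ∑ d ∈ Fib i j m n, ε ^ d i * MvPowerSeries.coeff d (f * g)
      = ∑ d ∈ Fib i j m n, ∑ p ∈ Finset.HasAntidiagonal.antidiagonal d,
          (ε ^ p.1 i * MvPowerSeries.coeff p.1 f) * (ε ^ p.2 i * MvPowerSeries.coeff p.2 g) := by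
        refine Finset.sum_congr rfl fun d _ => ?_
        rw [MvPowerSeries.coeff_mul, Finset.mul_sum]
        refine Finset.sum_congr rfl fun p hp => ?_
        rw [Finset.HasAntidiagonal.mem_antidiagonal] at hp
        have hdi : d i = p.1 i + p.2 i := by rw [← hp]; simp
        rw [hdi, pow_add]; ring
    _ = ∑ p ∈ (Fib i j m n).biUnion Finset.HasAntidiagonal.antidiagonal,
          (ε ^ p.1 i * MvPowerSeries.coeff p.1 f) * (ε ^ p.2 i * MvPowerSeries.coeff p.2 g) :=
        (Finset.sum_biUnion hdisj1).symm
    _ = ∑ pq ∈ Finset.HasAntidiagonal.antidiagonal n, ∑ p ∈ Fib i j m pq.1 ×ˢ Fib i j m pq.2,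
          (ε ^ p.1 i * MvPowerSeries.coeff p.1 f) * (ε ^ p.2 i * MvPowerSeries.coeff p.2 g) := by
        rw [hbu, Finset.sum_biUnion hdisj2]
    _ = ∑ pq ∈ Finset.HasAntidiagonal.antidiagonal n,
          PowerSeries.coeff pq.1 (phiFun i j ε m f) * PowerSeries.coeff pq.2 (phiFun i j ε m g) := by
        refine Finset.sum_congr rfl fun pq _ => ?_
        rw [coeff_phiFun, coeff_phiFun, Finset.sum_mul_sum, Finset.sum_product]

section Param2
variable {i j : Fin 2} {m : ℕ}

lemma phiFun_monomial (hij : i ≠ j) (ε : ℂ) (hm : 2 ≤ m) (e : Fin 2 →₀ ℕ) (c : ℂ) :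
    phiFun i j ε m (MvPowerSeries.monomial e c)
      = PowerSeries.monomial (wt i j m e) (ε ^ (e i) * c) := by
  classical
  ext n
  rw [coeff_phiFun, PowerSeries.coeff_monomial]
  simp only [MvPowerSeries.coeff_monomial, mul_ite, mul_zero]
  rw [Finset.sum_ite_eq' (Fib i j m n) e (fun d => ε ^ (d i) * c)]
  by_cases h : wt i j m e = n
  · rw [if_pos ((mem_Fib hij hm).mpr h), if_pos h.symm]
  · rw [if_neg (fun hc => h ((mem_Fib hij hm).mp hc)), if_neg (Ne.symm h)]

lemma phiFun_smul (ε : ℂ) (c : ℂ) (f : R2) :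
    phiFun i j ε m (c • f) = c • phiFun i j ε m f := by
  ext n
  rw [coeff_phiFun, PowerSeries.coeff_smul, coeff_phiFun, Finset.smul_sum]
  refine Finset.sum_congr rfl fun d _ => ?_
  rw [map_smul]
  simp only [smul_eq_mul]
  ring

lemma phiFun_add (ε : ℂ) (f g : R2) :
    phiFun i j ε m (f + g) = phiFun i j ε m f + phiFun i j ε m g := by
  ext n
  simp only [coeff_phiFun, map_add, mul_add, Finset.sum_add_distrib]

/-- the section of `phiFun`, embedding `ℂ⟦t⟧` as series in `X j`. -/
def sec (i j : Fin 2) (w : PowerSeries ℂ) : R2 :=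
  fun d => if d i = 0 then PowerSeries.coeff (d j) w else 0

lemma coeff_sec (w : PowerSeries ℂ) (d : Fin 2 →₀ ℕ) :
    MvPowerSeries.coeff d (sec i j w) = if d i = 0 then PowerSeries.coeff (d j) w else 0 :=
  rfl

lemma phiFun_sec (hij : i ≠ j) (ε : ℂ) (hm : 2 ≤ m) (w : PowerSeries ℂ) :
    phiFun i j ε m (sec i j w) = w := by
  ext n
  have h0 : (Finsupp.single j n) i = 0 := Finsupp.single_eq_of_ne' (Ne.symm hij)
  rw [coeff_phiFun, Finset.sum_eq_single (Finsupp.single j n)]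
  · rw [coeff_sec, h0, if_pos rfl, Finsupp.single_eq_same, pow_zero, one_mul]
  · intro d hd hne
    by_cases hdi : d i = 0
    · exfalso; apply hne
      have hd' := (mem_Fib hij hm).mp hd
      rw [wt, hdi, mul_zero, zero_add] at hd'
      rw [finsupp_decomp hij d, hdi, Finsupp.single_zero, zero_add, hd']
    · rw [coeff_sec, if_neg hdi, mul_zero]
  · intro h
    refine absurd ((mem_Fib hij hm).mpr ?_) h
    rw [wt, h0, Finsupp.single_eq_same, mul_zero, zero_add]

/-- partial sums used in division by `X i - ε X j ^ (m-1)` -/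
def Tdiv (i j : Fin 2) (ε : ℂ) (m : ℕ) (f : R2) (a b : ℕ) : ℂ :=
  ∑ v ∈ Finset.range (b + 1),
    if (m - 1) * v ≤ b then
      ε ^ v * MvPowerSeries.coeff (Finsupp.single i (a + v) + Finsupp.single j (b - (m-1) * v)) f
    else 0

lemma Tdiv_peel (ε : ℂ) (hm : 2 ≤ m) (f : R2) (a b : ℕ) :
    Tdiv i j ε m f a b
      = MvPowerSeries.coeff (Finsupp.single i a + Finsupp.single j b) f
        + (if m - 1 ≤ b then ε * Tdiv i j ε m f (a+1) (b - (m-1)) else 0) := by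
  have hM : 1 ≤ m - 1 := by omega
  rw [Tdiv, Finset.sum_range_succ']
  simp only [Nat.mul_zero, Nat.zero_le, if_true, pow_zero, one_mul, Nat.add_zero, Nat.sub_zero]
  rw [add_comm]
  congr 1
  by_cases hb : m - 1 ≤ b
  · rw [if_pos hb, Tdiv, Finset.mul_sum]
    rw [← Finset.sum_subset (Finset.range_subset_range.mpr (by omega : b - (m-1) + 1 ≤ b))]
    · refine Finset.sum_congr rfl fun v hv => ?_
      rw [Nat.mul_succ]
      by_cases hc : (m - 1) * v ≤ b - (m - 1)
      · rw [if_pos hc, if_pos (by omega : (m-1) * v + (m-1) ≤ b)]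
        have e1 : a + (v + 1) = a + 1 + v := by omega
        have e2 : b - ((m-1) * v + (m-1)) = b - (m-1) - (m-1) * v := by omega
        rw [pow_succ, e1, e2]
        ring
      · rw [if_neg hc, if_neg (by omega : ¬ ((m-1) * v + (m-1) ≤ b)), mul_zero]
    · intro v hv hv'
      rw [Finset.mem_range] at hv hv'
      rw [Nat.mul_succ, if_neg]
      have : v ≤ (m-1) * v := Nat.le_mul_of_pos_left v (by omega)
      omega
  · rw [if_neg hb, Finset.sum_eq_zero]
    intro v hv
    rw [Nat.mul_succ, if_neg]
    omega

lemma Tdiv_zero_eq_phi (hij : i ≠ j) (ε : ℂ) (hm : 2 ≤ m) (f : R2) (n : ℕ) :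
    Tdiv i j ε m f 0 n = PowerSeries.coeff n (phiFun i j ε m f) := by
  rw [coeff_phiFun, Tdiv, ← Finset.sum_filter]
  refine Finset.sum_nbij' (fun v => Finsupp.single i v + Finsupp.single j (n - (m-1) * v))
    (fun d => d i) ?_ ?_ ?_ ?_ ?_
  · intro v hv
    rw [Finset.mem_filter, Finset.mem_range] at hv
    rw [mem_Fib hij hm, wt, single_add_single_apply_left hij, single_add_single_apply_right hij]
    omega
  · intro d hd
    rw [mem_Fib hij hm, wt] at hd
    simp only [Finset.mem_filter, Finset.mem_range]
    have hdi : (m-1) * d i ≤ n := by omega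
    have hle : d i ≤ (m-1) * d i := Nat.le_mul_of_pos_left _ (by omega)
    exact ⟨by omega, hdi⟩
  · intro v hv
    simp only [single_add_single_apply_left hij]
  · intro d hd
    rw [mem_Fib hij hm, wt] at hd
    show Finsupp.single i (d i) + Finsupp.single j (n - (m-1) * d i) = d
    have hdj : n - (m-1) * d i = d j := by omega
    rw [hdj, ← finsupp_decomp hij]
  · intro v hv
    simp only [single_add_single_apply_left hij, zero_add]
end Param2



section Param3
variable {i j : Fin 2} {m : ℕ}

/-- the irreducible element `X i - ε X j ^ (m-1)` -/
def qel (i j : Fin 2) (ε : ℂ) (m : ℕ) : R2 :=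
  MvPowerSeries.X i - MvPowerSeries.C ε * MvPowerSeries.X j ^ (m-1)

lemma qel_eq (i j : Fin 2) (ε : ℂ) (m : ℕ) :
    qel i j ε m = MvPowerSeries.monomial (Finsupp.single i 1) 1
      - MvPowerSeries.monomial (Finsupp.single j (m-1)) ε := by
  rw [qel, MvPowerSeries.X_pow_eq]
  have : MvPowerSeries.C ε * MvPowerSeries.monomial (Finsupp.single j (m-1)) 1
      = MvPowerSeries.monomial (Finsupp.single j (m-1)) ε := by
    rw [← MvPowerSeries.smul_eq_C_mul, ← map_smul, smul_eq_mul, mul_one]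
  rw [this]
  rfl

def gdiv (i j : Fin 2) (ε : ℂ) (m : ℕ) (f : R2) : R2 :=
  fun d => Tdiv i j ε m f (d i + 1) (d j)

lemma coeff_gdiv (ε : ℂ) (f : R2) (d : Fin 2 →₀ ℕ) :
    MvPowerSeries.coeff d (gdiv i j ε m f) = Tdiv i j ε m f (d i + 1) (d j) := rfl

lemma eq_q_mul_of_phi_zero (hij : i ≠ j) (ε : ℂ) (hm : 2 ≤ m) (f : R2)
    (hf : phiFun i j ε m f = 0) :
    f = qel i j ε m * gdiv i j ε m f := by
  apply MvPowerSeries.ext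
  intro e
  rw [qel_eq, sub_mul, map_sub, MvPowerSeries.coeff_monomial_mul, MvPowerSeries.coeff_monomial_mul]
  have hle1 : (Finsupp.single i 1 ≤ e) ↔ 1 ≤ e i := Finsupp.single_le_iff
  have hle2 : (Finsupp.single j (m-1) ≤ e) ↔ m - 1 ≤ e j := Finsupp.single_le_iff
  have hsub1i : ((e - Finsupp.single i 1 : Fin 2 →₀ ℕ)) i = e i - 1 := by
    rw [Finsupp.tsub_apply, Finsupp.single_eq_same]
  have hsub1j : ((e - Finsupp.single i 1 : Fin 2 →₀ ℕ)) j = e j := by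
    rw [Finsupp.tsub_apply, Finsupp.single_eq_of_ne' hij, Nat.sub_zero]
  have hsub2i : (e - Finsupp.single j (m-1)) i = e i := by
    rw [Finsupp.tsub_apply, Finsupp.single_eq_of_ne' (Ne.symm hij), Nat.sub_zero]
  have hsub2j : (e - Finsupp.single j (m-1)) j = e j - (m-1) := by
    rw [Finsupp.tsub_apply, Finsupp.single_eq_same]
  have hpeel := Tdiv_peel (i := i) (j := j) ε hm f (e i) (e j)
  have hcoe : MvPowerSeries.coeff (Finsupp.single i (e i) + Finsupp.single j (e j)) f
      = MvPowerSeries.coeff e f := by rw [← finsupp_decomp hij]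
  rw [hcoe] at hpeel
  by_cases h1 : 1 ≤ e i
  · rw [if_pos (hle1.mpr h1), one_mul, coeff_gdiv, hsub1i, hsub1j]
    have : e i - 1 + 1 = e i := by omega
    rw [this]
    by_cases h2 : m - 1 ≤ e j
    · rw [if_pos (hle2.mpr h2), coeff_gdiv, hsub2i, hsub2j]
      rw [if_pos h2] at hpeel
      linear_combination -hpeel
    · rw [if_neg (fun hc => h2 (hle2.mp hc))]
      rw [if_neg h2] at hpeel
      linear_combination -hpeel
  · rw [if_neg (fun hc => h1 (hle1.mp hc))]
    have h0 : e i = 0 := by omega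
    have hz : Tdiv i j ε m f 0 (e j) = 0 := by
      rw [Tdiv_zero_eq_phi hij ε hm, hf, map_zero]
    rw [h0] at hpeel
    rw [hz] at hpeel
    by_cases h2 : m - 1 ≤ e j
    · rw [if_pos (hle2.mpr h2), coeff_gdiv, hsub2i, hsub2j, h0]
      rw [if_pos h2] at hpeel
      linear_combination -hpeel
    · rw [if_neg (fun hc => h2 (hle2.mp hc))]
      rw [if_neg h2] at hpeel
      linear_combination -hpeel

/-- The substitution algebra homomorphism `X i ↦ ε t^(m-1)`, `X j ↦ t`. -/
def Φ (hij : i ≠ j) (ε : ℂ) (hm : 2 ≤ m) : R2 →ₐ[ℂ] PowerSeries ℂ where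
  toFun := phiFun i j ε m
  map_one' := by
    have h := phiFun_monomial hij ε hm 0 1
    rw [MvPowerSeries.monomial_zero_eq_C_apply, map_one] at h
    rw [h]
    simp [wt, PowerSeries.monomial_zero_eq_C_apply]
  map_mul' := phiFun_mul hij ε hm
  map_zero' := by
    ext n; rw [coeff_phiFun]; simp
  map_add' := phiFun_add ε
  commutes' := by
    intro c
    have h := phiFun_monomial hij ε hm 0 c
    rw [MvPowerSeries.monomial_zero_eq_C_apply] at h
    show phiFun i j ε m (MvPowerSeries.C c) = _
    rw [h]
    simp [wt, PowerSeries.monomial_zero_eq_C_apply]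

lemma Φ_apply (hij : i ≠ j) (ε : ℂ) (hm : 2 ≤ m) (f : R2) :
    Φ hij ε hm f = phiFun i j ε m f := rfl

lemma Φ_Xj (hij : i ≠ j) (ε : ℂ) (hm : 2 ≤ m) :
    Φ hij ε hm (MvPowerSeries.X j) = PowerSeries.X := by
  rw [Φ_apply]
  show phiFun i j ε m (MvPowerSeries.monomial (Finsupp.single j 1) 1) = _
  rw [phiFun_monomial hij ε hm]
  rw [wt, Finsupp.single_eq_of_ne' (Ne.symm hij), Finsupp.single_eq_same, mul_zero, zero_add]
  rw [pow_zero, one_mul, PowerSeries.X_eq]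

lemma Φ_qel (hij : i ≠ j) (ε : ℂ) (hm : 2 ≤ m) : Φ hij ε hm (qel i j ε m) = 0 := by
  rw [Φ_apply, qel_eq]
  have hsub : ∀ f g : R2, phiFun i j ε m (f - g) = phiFun i j ε m f - phiFun i j ε m g := by
    intro f g
    have := phiFun_add (i := i) (j := j) (m := m) ε (f - g) g
    rw [sub_add_cancel] at this
    linear_combination -this
  rw [hsub, phiFun_monomial hij ε hm, phiFun_monomial hij ε hm]
  rw [wt, wt, Finsupp.single_eq_same, Finsupp.single_eq_same,
    Finsupp.single_eq_of_ne' hij, Finsupp.single_eq_of_ne' (Ne.symm hij)]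
  norm_num

lemma Φ_surj (hij : i ≠ j) (ε : ℂ) (hm : 2 ≤ m) : Function.Surjective (Φ hij ε hm) :=
  fun w => ⟨sec i j w, phiFun_sec hij ε hm w⟩

lemma ker_Φ (hij : i ≠ j) (ε : ℂ) (hm : 2 ≤ m) :
    RingHom.ker (Φ hij ε hm) = Ideal.span {qel i j ε m} := by
  ext f
  rw [RingHom.mem_ker, Ideal.mem_span_singleton]
  constructor
  · intro h
    exact ⟨gdiv i j ε m f, eq_q_mul_of_phi_zero hij ε hm f h⟩
  · rintro ⟨c, rfl⟩
    rw [map_mul, Φ_qel, zero_mul]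

lemma qel_ne_zero (hij : i ≠ j) (ε : ℂ) (hm : 2 ≤ m) : qel i j ε m ≠ 0 := by
  intro h
  have h1 : MvPowerSeries.coeff (Finsupp.single i 1) (qel i j ε m) = 1 := by
    rw [qel_eq, map_sub, MvPowerSeries.coeff_monomial, MvPowerSeries.coeff_monomial]
    rw [if_pos rfl, if_neg, sub_zero]
    intro hc
    have := congrArg (fun d : Fin 2 →₀ ℕ => d i) hc
    simp only [Finsupp.single_eq_same, Finsupp.single_eq_of_ne' (Ne.symm hij)] at this
    exact one_ne_zero this
  rw [h, map_zero] at h1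
  exact zero_ne_one h1

lemma qel_prime (hij : i ≠ j) (ε : ℂ) (hm : 2 ≤ m) : Prime (qel i j ε m) := by
  rw [← Ideal.span_singleton_prime (qel_ne_zero hij ε hm)]
  rw [← ker_Φ hij ε hm]
  exact RingHom.ker_isPrime _

end Param3



section Param4
variable {i j : Fin 2} {m : ℕ}

/-- finrank of t-quotient -/

lemma finrank_ps_quot (m : ℕ) :
    Module.finrank ℂ (PowerSeries ℂ ⧸ Ideal.span {(PowerSeries.X : PowerSeries ℂ) ^ m}) = m := by
  classical
  set T : PowerSeries ℂ →ₗ[ℂ] (Fin m → ℂ) :=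
    LinearMap.pi (fun r : Fin m => PowerSeries.coeff (r : ℕ)) with hT
  have hker : LinearMap.ker T
      = (Ideal.span {(PowerSeries.X : PowerSeries ℂ) ^ m}).restrictScalars ℂ := by
    ext f
    rw [LinearMap.mem_ker, Submodule.restrictScalars_mem, Ideal.mem_span_singleton,
      PowerSeries.X_pow_dvd_iff]
    constructor
    · intro h r hr
      have := congrFun h ⟨r, hr⟩
      simpa [hT] using this
    · intro h
      funext r
      simpa [hT] using h r r.isLt
  have hsurj : Function.Surjective T := by
    intro v
    refine ⟨∑ r : Fin m, PowerSeries.monomial (r : ℕ) (v r), ?_⟩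
    funext r'
    simp only [hT, LinearMap.pi_apply, map_sum, PowerSeries.coeff_monomial]
    rw [Finset.sum_eq_single r']
    · rw [if_pos rfl]
    · intro r _ hne
      rw [if_neg (fun hc => hne (Fin.val_injective hc.symm))]
    · intro h; exact absurd (Finset.mem_univ r') h
  have e1 := T.quotKerEquivOfSurjective hsurj
  rw [hker] at e1
  have e2 := (Submodule.Quotient.restrictScalarsEquiv ℂ
    ((Ideal.span {(PowerSeries.X : PowerSeries ℂ) ^ m}) : Submodule (PowerSeries ℂ) (PowerSeries ℂ)))
  calc Module.finrank ℂ (PowerSeries ℂ ⧸ Ideal.span {(PowerSeries.X : PowerSeries ℂ) ^ m})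
      = Module.finrank ℂ (PowerSeries ℂ ⧸
          ((Ideal.span {(PowerSeries.X : PowerSeries ℂ) ^ m}).restrictScalars ℂ)) :=
        e2.symm.finrank_eq
    _ = Module.finrank ℂ (Fin m → ℂ) := e1.finrank_eq
    _ = m := by rw [Module.finrank_pi, Fintype.card_fin]


lemma comap_Φ (hij : i ≠ j) (ε : ℂ) (hm : 2 ≤ m) :
    Ideal.comap (Φ hij ε hm) (Ideal.span {(PowerSeries.X : PowerSeries ℂ) ^ m})
      = Ideal.span {qel i j ε m, MvPowerSeries.X j ^ m} := by
  ext f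
  rw [Ideal.mem_comap, Ideal.mem_span_singleton, Ideal.mem_span_pair]
  constructor
  · rintro ⟨u, hu⟩
    obtain ⟨su, hsu⟩ := Φ_surj hij ε hm u
    have hker : f - MvPowerSeries.X j ^ m * su ∈ RingHom.ker (Φ hij ε hm) := by
      rw [RingHom.mem_ker, map_sub, map_mul, map_pow, Φ_Xj, hsu, hu, sub_self]
    rw [ker_Φ hij ε hm, Ideal.mem_span_singleton] at hker
    obtain ⟨c, hc⟩ := hker
    refine ⟨c, su, ?_⟩
    linear_combination -hc
  · rintro ⟨a, b, rfl⟩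
    rw [map_add, map_mul, map_mul, Φ_qel, mul_zero, zero_add, map_pow, Φ_Xj]
    exact dvd_mul_left _ _

lemma finrank_quot_pair (hij : i ≠ j) (ε : ℂ) (hm : 2 ≤ m) :
    Module.finrank ℂ (R2 ⧸ Ideal.span {qel i j ε m, MvPowerSeries.X j ^ m}) = m := by
  set J := Ideal.span {(PowerSeries.X : PowerSeries ℂ) ^ m} with hJ
  set ρ : R2 →ₐ[ℂ] (PowerSeries ℂ ⧸ J) := (Ideal.Quotient.mkₐ ℂ J).comp (Φ hij ε hm) with hρ
  have hρs : Function.Surjective ρ :=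
    (Ideal.Quotient.mkₐ_surjective ℂ J).comp (Φ_surj hij ε hm)
  have hkerρ : RingHom.ker ρ = Ideal.span {qel i j ε m, MvPowerSeries.X j ^ m} := by
    rw [← comap_Φ hij ε hm]
    ext x
    rw [RingHom.mem_ker, Ideal.mem_comap]
    rw [hρ]
    simp only [AlgHom.coe_comp, Function.comp_apply, Ideal.Quotient.mkₐ_eq_mk]
    rw [Ideal.Quotient.eq_zero_iff_mem]
  have e1 := Ideal.quotientKerAlgEquivOfSurjective hρs
  have e1 := (Ideal.quotientEquivAlgOfEq ℂ hkerρ).symm.trans e1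
  have := e1.toLinearEquiv.finrank_eq
  rw [this]
  exact finrank_ps_quot m

end Param4

section Abstract
variable {A : Type*} [CommRing A] [IsDomain A]

lemma span_pair_comm (x y : A) : Ideal.span {x, y} = Ideal.span {y, x} := by
  rw [Set.pair_comm]

lemma span_pair_of_associated {l n a b : A} (h1 : Associated l a) (h2 : Associated n b) :
    Ideal.span {l, n} = Ideal.span {a, b} := by
  rw [Ideal.span_insert, Ideal.span_insert,
    Ideal.span_singleton_eq_span_singleton.mpr h1,
    Ideal.span_singleton_eq_span_singleton.mpr h2]

lemma span_pair_congr_right {x y y' : A} (h : y' ∈ Ideal.span {x, y})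
    (h' : y ∈ Ideal.span {x, y'}) :
    Ideal.span {x, y} = Ideal.span {x, y'} := by
  apply le_antisymm
  · rw [Ideal.span_le, Set.insert_subset_iff, Set.singleton_subset_iff]
    exact ⟨Ideal.subset_span (Set.mem_insert _ _), h'⟩
  · rw [Ideal.span_le, Set.insert_subset_iff, Set.singleton_subset_iff]
    exact ⟨Ideal.subset_span (Set.mem_insert _ _), h⟩

lemma factor_aux {p q r l n : A} (hp : Prime p) (hq : Prime q) (hr : Prime r)
    (hn : ¬ IsUnit n) (h : l * n = p * (q * r)) (hpl : p ∣ l) :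
    Ideal.span {l, n} = Ideal.span {p, q * r} ∨
    Ideal.span {l, n} = Ideal.span {q, p * r} ∨
    Ideal.span {l, n} = Ideal.span {r, p * q} := by
  obtain ⟨l₁, rfl⟩ := hpl
  rw [mul_assoc] at h
  have h2 : l₁ * n = q * r := mul_left_cancel₀ hp.ne_zero h
  rcases hq.2.2 l₁ n ⟨r, h2⟩ with hql | hqn
  · obtain ⟨l₂, rfl⟩ := hql
    have h3 : l₂ * n = r := by
      apply mul_left_cancel₀ hq.ne_zero
      rw [← h2]; ring
    rcases hr.irreducible.isUnit_or_isUnit h3.symm with hu | hu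
    · right; right
      have hl' : Associated (p * (q * l₂)) (p * q) :=
        (Associated.symm ⟨hu.unit, by rw [IsUnit.unit_spec]; ring⟩)
      have hn' : Associated n r := ⟨hu.unit, by rw [IsUnit.unit_spec, mul_comm]; exact h3⟩
      exact (span_pair_of_associated hl' hn').trans (span_pair_comm _ _)
    · exact absurd hu hn
  · obtain ⟨n₁, rfl⟩ := hqn
    have h3 : l₁ * n₁ = r := by
      apply mul_left_cancel₀ hq.ne_zero
      rw [← h2]; ring
    rcases hr.irreducible.isUnit_or_isUnit h3.symm with hu | hu
    · left
      have hl' : Associated (p * l₁) p := Associated.symm ⟨hu.unit, by rw [IsUnit.unit_spec]⟩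
      have hn1 : Associated n₁ r := ⟨hu.unit, by rw [IsUnit.unit_spec, mul_comm]; exact h3⟩
      exact span_pair_of_associated hl' (Associated.mul_left q hn1)
    · right; left
      have hn' : Associated (q * n₁) q := Associated.symm ⟨hu.unit, by rw [IsUnit.unit_spec]⟩
      have hl1 : Associated l₁ r := ⟨hu.unit, by rw [IsUnit.unit_spec]; exact h3⟩
      exact (span_pair_of_associated (Associated.mul_left p hl1) hn').trans (span_pair_comm _ _)

lemma factor_analysis {p q r l n : A} (hp : Prime p) (hq : Prime q) (hr : Prime r)
    (hl : ¬ IsUnit l) (hn : ¬ IsUnit n) (h : l * n = p * (q * r)) :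
    Ideal.span {l, n} = Ideal.span {p, q * r} ∨
    Ideal.span {l, n} = Ideal.span {q, p * r} ∨
    Ideal.span {l, n} = Ideal.span {r, p * q} := by
  rcases hp.2.2 l n ⟨q * r, h⟩ with hpl | hpn
  · exact factor_aux hp hq hr hn h hpl
  · have h' : n * l = p * (q * r) := by rw [mul_comm]; exact h
    have := factor_aux hp hq hr hl h' hpn
    rwa [span_pair_comm n l] at this

end Abstract

end Stmt8Aux

/-- Theorem 3.14(2), case `D⁻_{2k}`: if `l·n = Y·(X² − Y^{2k−2})` in `ℂ⟦X,Y⟧`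
with `l, n` vanishing at the origin, then `dim_ℂ ℂ⟦X,Y⟧/⟨l,n⟩` equals `2` or `k`. -/
theorem stmt8 (k : ℕ) (hk : 2 ≤ k)
    (l n : MvPowerSeries (Fin 2) ℂ)
    (hl : constantCoeff l = 0)
    (hn : constantCoeff n = 0)
    (hln : l * n = X 1 * ((X 0) ^ 2 - (X 1) ^ (2 * k - 2))) :
    Module.finrank ℂ (MvPowerSeries (Fin 2) ℂ ⧸ Ideal.span {l, n}) = 2 ∨
    Module.finrank ℂ (MvPowerSeries (Fin 2) ℂ ⧸ Ideal.span {l, n}) = k := by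
  classical
  have hij : (0 : Fin 2) ≠ 1 := by decide
  have hji : (1 : Fin 2) ≠ 0 := by decide
  set c : MvPowerSeries (Fin 2) ℂ := (X 1) ^ (k - 1) with hc
  have hq_def : qel 0 1 1 k = X 0 - c := by rw [qel, map_one, one_mul]
  have hr_def : qel 0 1 (-1) k = X 0 + c := by
    rw [qel, map_neg, map_one, neg_one_mul, sub_neg_eq_add]
  have hp_def : qel 1 0 0 2 = X 1 := by
    rw [qel, map_zero, zero_mul, sub_zero]
  have hpow2 : c * c = (X 1 : MvPowerSeries (Fin 2) ℂ) ^ (2 * k - 2) := by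
    rw [hc, ← pow_add]; congr 1; omega
  have hpowk : (X 1 : MvPowerSeries (Fin 2) ℂ) * c = (X 1) ^ k := by
    rw [hc, mul_comm, ← pow_succ]; congr 1; omega
  have hpow2' : (X 1 : MvPowerSeries (Fin 2) ℂ) ^ (2 * k - 3) * X 1 = (X 1) ^ (2 * k - 2) := by
    rw [← pow_succ]; congr 1; omega
  have hlu : ¬ IsUnit l := by
    intro hu
    have h2 := hu.map (constantCoeff)
    rw [hl] at h2
    exact not_isUnit_zero h2
  have hnu : ¬ IsUnit n := by
    intro hu
    have h2 := hu.map (constantCoeff)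
    rw [hn] at h2
    exact not_isUnit_zero h2
  have hp : Prime (X 1 : MvPowerSeries (Fin 2) ℂ) := hp_def ▸ qel_prime hji (0 : ℂ) le_rfl
  have hq : Prime (qel 0 1 (1:ℂ) k) := qel_prime hij (1 : ℂ) hk
  have hr : Prime (qel 0 1 (-1:ℂ) k) := qel_prime hij (-1 : ℂ) hk
  have hfact : l * n = (X 1) * (qel 0 1 (1:ℂ) k * qel 0 1 (-1:ℂ) k) := by
    rw [hln, hq_def, hr_def]
    linear_combination (X 1 : MvPowerSeries (Fin 2) ℂ) * hpow2
  rcases factor_analysis hp hq hr hlu hnu hfact with hsp | hsp | hsp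
  · -- span {X 1, q*r} = span {qel 1 0 0 2, X 0 ^ 2}, dimension 2
    left
    have hspan2 : Ideal.span {(X 1 : MvPowerSeries (Fin 2) ℂ), qel 0 1 (1:ℂ) k * qel 0 1 (-1:ℂ) k}
        = Ideal.span {(X 1 : MvPowerSeries (Fin 2) ℂ), (X 0) ^ 2} := by
      apply span_pair_congr_right
      · rw [Ideal.mem_span_pair]
        exact ⟨(X 1) ^ (2 * k - 3), 1, by rw [hq_def, hr_def]; linear_combination hpow2' - hpow2⟩
      · rw [Ideal.mem_span_pair]
        exact ⟨-((X 1) ^ (2 * k - 3)), 1, by rw [hq_def, hr_def]; linear_combination hpow2 - hpow2'⟩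
    rw [hsp, hspan2, ← hp_def]
    exact finrank_quot_pair hji (0 : ℂ) le_rfl
  · -- span {q, p*r} = span {qel 0 1 1 k, X 1 ^ k}, dimension k
    right
    have hhalf : MvPowerSeries.C (σ := Fin 2) (1/2 : ℂ) + MvPowerSeries.C (1/2 : ℂ)
        = 1 := by rw [← map_add]; norm_num
    have hspan2 : Ideal.span {qel 0 1 (1:ℂ) k, (X 1) * qel 0 1 (-1:ℂ) k}
        = Ideal.span {qel 0 1 (1:ℂ) k, (X 1) ^ k} := by
      apply span_pair_congr_right
      · rw [Ideal.mem_span_pair]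
        refine ⟨-(MvPowerSeries.C (1/2 : ℂ) * X 1), MvPowerSeries.C (1/2 : ℂ),
          ?_⟩
        rw [hq_def, hr_def]
        linear_combination (MvPowerSeries.C (1/2 : ℂ) + MvPowerSeries.C (1/2 : ℂ)) * hpowk + ((X 1 : MvPowerSeries (Fin 2) ℂ) ^ k) * hhalf
      · rw [Ideal.mem_span_pair]
        refine ⟨X 1, 2, ?_⟩
        rw [hq_def, hr_def]
        linear_combination (-2 : MvPowerSeries (Fin 2) ℂ) * hpowk
    rw [hsp, hspan2]
    exact finrank_quot_pair hij (1 : ℂ) hk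
  · -- span {r, p*q} = span {qel 0 1 (-1) k, X 1 ^ k}, dimension k
    right
    have hhalf : MvPowerSeries.C (σ := Fin 2) (1/2 : ℂ) + MvPowerSeries.C (1/2 : ℂ)
        = 1 := by rw [← map_add]; norm_num
    have hspan2 : Ideal.span {qel 0 1 (-1:ℂ) k, (X 1) * qel 0 1 (1:ℂ) k}
        = Ideal.span {qel 0 1 (-1:ℂ) k, (X 1) ^ k} := by
      apply span_pair_congr_right
      · rw [Ideal.mem_span_pair]
        refine ⟨MvPowerSeries.C (1/2 : ℂ) * X 1, -(MvPowerSeries.C (1/2 : ℂ)),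
          ?_⟩
        rw [hq_def, hr_def]
        linear_combination (MvPowerSeries.C (1/2 : ℂ) + MvPowerSeries.C (1/2 : ℂ)) * hpowk + ((X 1 : MvPowerSeries (Fin 2) ℂ) ^ k) * hhalf
      · rw [Ideal.mem_span_pair]
        refine ⟨X 1, -2, ?_⟩
        rw [hq_def, hr_def]
        linear_combination (2 : MvPowerSeries (Fin 2) ℂ) * hpowk
    rw [hsp, hspan2]
    exact finrank_quot_pair hij (-1 : ℂ) hk
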